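/- arXiv:1308.6429 — 2 statements merged into one kernel-verified Lean document; each statement's English description precedes it below -/
import Mathlib

section
/- Under the hypotheses: g is a nondegenerate symmetric bilinear form on V, φ² = Id − η⊗ξ with η(X) = g(ξ,X), η(ξ) = 1, g(φX, φY) = −g(X,Y) + η(X)η(Y), R(X,Y,Z,W) = g(R(X,Y)Z, W) is an algebraic curvature tensor (antisymmetric in first and last pairs, symmetric under pair exchange, first Bianchi), φR(X,Y)Z = R(X,Y)φZ, and R(X,Y)ξ = 0; then R(X,Y,φZ,φW) = −R(X,Y,Z,W) for all X,Y,Z,W. -/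
/-- Part of Proposition 1, eq. (4): `R(X,Y,φZ,φW) = −R(X,Y,Z,W)` for an algebraic
curvature tensor commuting with `φ` and killing `ξ`, in an almost para-contact
metric setting. -/
theorem stmt5 (V : Type*) [AddCommGroup V] [Module ℝ V]
    (g : V →ₗ[ℝ] V →ₗ[ℝ] ℝ)
    (hg_symm : ∀ x y, g x y = g y x)
    (hg_nd : ∀ x, (∀ y, g x y = 0) → x = 0)
    (φ : V →ₗ[ℝ] V) (ξ : V) (η : V →ₗ[ℝ] ℝ)
    (hφ2 : ∀ x, φ (φ x) = x - η x • ξ)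
    (hηξ : η ξ = 1)
    (hη : ∀ x, η x = g ξ x)
    (hcompat : ∀ x y, g (φ x) (φ y) = - g x y + η x * η y)
    (R : V →ₗ[ℝ] V →ₗ[ℝ] V →ₗ[ℝ] V)
    (hR1 : ∀ x y z w, g (R x y z) w = - g (R y x z) w)
    (hR2 : ∀ x y z w, g (R x y z) w = - g (R x y w) z)
    (hR3 : ∀ x y z w, g (R x y z) w = g (R z w x) y)
    (hBianchi : ∀ x y z, R x y z + R y z x + R z x y = 0)
    (hcomm : ∀ x y z, φ (R x y z) = R x y (φ z))
    (hRξ : ∀ x y, R x y ξ = 0) :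
    ∀ x y z w, g (R x y (φ z)) (φ w) = - g (R x y z) w := by
  intro x y z w
  have hη0 : η (R x y z) = 0 := by
    rw [hη, hg_symm, hR2, hRξ]
    simp
  rw [← hcomm, hcompat, hη0]
  ring
end

section
/- In the Lie algebra 𝔰 over ℝ spanned by K₁,…,K₆ with the only nonzero brackets [K₁,K₄] = −K₂, [K₁,K₅] = −K₃, [K₄,K₅] = K₆, [K₄,K₆] = −K₃, [K₅,K₆] = K₂ (extended bilinearly and antisymmetrically), the Jacobi identity holds, and 𝔰 is 3-step nilpotent: the lower central series satisfies 𝔰¹ = [𝔰,𝔰] = span(K₂,K₃,K₆), 𝔰² = [𝔰,𝔰¹] = span(K₂,K₃), 𝔰³ = [𝔰,𝔰²] = 0. -/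
/-- The bracket of the Lie algebra `𝔰` of Section 7.3 on `ℝ⁶`, in the basis
`K₁,…,K₆` (indices `0,…,5`), with the only nonzero brackets
`[K₁,K₄] = −K₂`, `[K₁,K₅] = −K₃`, `[K₄,K₅] = K₆`, `[K₄,K₆] = −K₃`,
`[K₅,K₆] = K₂`. -/
def sBr (x y : Fin 6 → ℝ) : Fin 6 → ℝ := fun i =>
  if i = 1 then -(x 0 * y 3 - x 3 * y 0) + (x 4 * y 5 - x 5 * y 4)
  else if i = 2 then -(x 0 * y 4 - x 4 * y 0) - (x 3 * y 5 - x 5 * y 3)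
  else if i = 5 then x 3 * y 4 - x 4 * y 3
  else 0

lemma br_e345 : sBr (Pi.single 3 1) (Pi.single 4 1) = Pi.single 5 1 := by
  funext i; fin_cases i <;> simp [sBr, Pi.single_apply]

lemma br_e451 : sBr (Pi.single 4 1) (Pi.single 5 1) = Pi.single 1 1 := by
  funext i; fin_cases i <;> simp [sBr, Pi.single_apply]

lemma br_e352 : sBr (Pi.single 3 (-1 : ℝ)) (Pi.single 5 1) = Pi.single 2 1 := by
  funext i; fin_cases i <;> simp [sBr, Pi.single_apply]

lemma br_decomp (x y : Fin 6 → ℝ) :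
    sBr x y = (sBr x y 1) • (Pi.single 1 1 : Fin 6 → ℝ) + (sBr x y 2) • (Pi.single 2 1 : Fin 6 → ℝ)
      + (sBr x y 5) • (Pi.single 5 1 : Fin 6 → ℝ) := by
  funext i; fin_cases i <;> simp [sBr, Pi.single_apply]

/-- Section 7.3: the bracket table of `𝔰` defines a Lie algebra (antisymmetry
and the Jacobi identity hold) which is 3-step nilpotent: its lower central
series is `𝔰¹ = span(K₂,K₃,K₆)`, `𝔰² = span(K₂,K₃)`, `𝔰³ = 0`. -/
theorem stmt18 :
    (∀ x y, sBr x y = - sBr y x) ∧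
    (∀ x y z, sBr x (sBr y z) + sBr y (sBr z x) + sBr z (sBr x y) = 0) ∧
    Submodule.span ℝ {w : Fin 6 → ℝ | ∃ x y, sBr x y = w}
      = Submodule.span ℝ {Pi.single 1 1, Pi.single 2 1, Pi.single 5 1} ∧
    Submodule.span ℝ {w : Fin 6 → ℝ | ∃ x y,
        y ∈ Submodule.span ℝ {w' : Fin 6 → ℝ | ∃ x' y', sBr x' y' = w'} ∧ sBr x y = w}
      = Submodule.span ℝ {Pi.single 1 1, Pi.single 2 1} ∧
    (∀ x y, y ∈ (Submodule.span ℝ {Pi.single 1 1, Pi.single 2 1} : Submodule ℝ (Fin 6 → ℝ))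
      → sBr x y = 0) := by
  have h3 : Submodule.span ℝ {w : Fin 6 → ℝ | ∃ x y, sBr x y = w}
      = Submodule.span ℝ {Pi.single 1 1, Pi.single 2 1, Pi.single 5 1} := by
    apply le_antisymm
    · rw [Submodule.span_le]
      rintro w ⟨x, y, rfl⟩
      rw [br_decomp x y]
      refine Submodule.add_mem _ (Submodule.add_mem _ ?_ ?_) ?_ <;>
        exact Submodule.smul_mem _ _ (Submodule.subset_span (by simp))
    · rw [Submodule.span_le]
      rintro w (rfl | rfl | rfl)
      · exact Submodule.subset_span ⟨_, _, br_e451⟩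
      · exact Submodule.subset_span ⟨_, _, br_e352⟩
      · exact Submodule.subset_span ⟨_, _, br_e345⟩
  refine ⟨?_, ?_, h3, ?_, ?_⟩
  · intro x y; funext i; fin_cases i <;> simp [sBr] <;> ring
  · intro x y z; funext i; fin_cases i <;> simp [sBr] <;> ring
  · apply le_antisymm
    · rw [Submodule.span_le]
      rintro w ⟨x, y, hy, rfl⟩
      rw [h3] at hy
      rw [show ({Pi.single 1 1, Pi.single 2 1, Pi.single 5 1} : Set (Fin 6 → ℝ))
        = insert (Pi.single 1 1) {Pi.single 2 1, Pi.single 5 1} from rfl,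
        Submodule.mem_span_insert] at hy
      obtain ⟨a, z, hz, rfl⟩ := hy
      rw [Submodule.mem_span_pair] at hz
      obtain ⟨b, c, rfl⟩ := hz
      have : sBr x (a • (Pi.single 1 1 : Fin 6 → ℝ) + (b • (Pi.single 2 1 : Fin 6 → ℝ) + c • (Pi.single 5 1 : Fin 6 → ℝ)))
          = (x 4 * c) • (Pi.single 1 1 : Fin 6 → ℝ) + (-(x 3 * c)) • (Pi.single 2 1 : Fin 6 → ℝ) := by
        funext i; fin_cases i <;> simp [sBr, Pi.single_apply]
      rw [this]
      exact Submodule.add_mem _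
        (Submodule.smul_mem _ _ (Submodule.subset_span (by simp)))
        (Submodule.smul_mem _ _ (Submodule.subset_span (by simp)))
    · rw [Submodule.span_le]
      have he5 : (Pi.single 5 1 : Fin 6 → ℝ) ∈
          Submodule.span ℝ {w' : Fin 6 → ℝ | ∃ x' y', sBr x' y' = w'} :=
        Submodule.subset_span ⟨_, _, br_e345⟩
      rintro w (rfl | rfl)
      · exact Submodule.subset_span ⟨_, _, he5, br_e451⟩
      · exact Submodule.subset_span ⟨_, _, he5, br_e352⟩
  · intro x y hy
    rw [Submodule.mem_span_pair] at hy
    obtain ⟨a, b, rfl⟩ := hy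
    funext i; fin_cases i <;> simp [sBr, Pi.single_apply]
end
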